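/- If a dynamic policy ↣ is local, then for every system M, M is ta^◇-secure with respect to ↣ if and only if M is ta^□-secure with respect to ↣. -/
import Mathlib


open Classical

/-- Binary trees over actions, values of the `ta` purge functions. -/
inductive TATree (A : Type) : Type where
  | eps : TATree A
  | node : TATree A → TATree A → A → TATree A

/-- Run a deterministic system along a trace (newest action at the head of the list). -/
def runL {S A : Type} (step : S → A → S) (s0 : S) : List A → S
  | [] => s0
  | a :: α => step (runL step s0 α) a

/-- The permissive purge function `ta^◇` for a dynamic policy `P`. -/
noncomputable def taD {D A : Type} (dm : A → D) (P : List A → D → D → Prop) :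
    List A → D → TATree A
  | [], _ => TATree.eps
  | a :: α, u =>
    if P α (dm a) u then TATree.node (taD dm P α u) (taD dm P α (dm a)) a
    else taD dm P α u

/-- The unwinding relations: smallest family of equivalence relations on traces
satisfying WSC and DLR with respect to the dynamic policy `P`. -/
inductive Unw {D A : Type} (dm : A → D) (P : List A → D → D → Prop) :
    D → List A → List A → Prop where
  | refl (u : D) (α : List A) : Unw dm P u α α
  | symm {u : D} {α β : List A} : Unw dm P u α β → Unw dm P u β α
  | trans {u : D} {α β γ : List A} : Unw dm P u α β → Unw dm P u β γ → Unw dm P u α γ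
  | dlr (u : D) (α : List A) (a : A) : ¬ P α (dm a) u → Unw dm P u (a :: α) α
  | wsc (u : D) {α β : List A} (a : A) :
      Unw dm P u α β → Unw dm P (dm a) α β → Unw dm P u (a :: α) (a :: β)

/-- The prohibitive purge function `ta^□`, whose condition is distributed knowledge
of the policy edge, interpreted over the Kripke structure given by the unwinding relations. -/
noncomputable def taB {D A : Type} (dm : A → D) (P : List A → D → D → Prop) :
    List A → D → TATree A
  | [], _ => TATree.eps
  | a :: α, u =>
    if (∀ β, Unw dm P u α β → Unw dm P (dm a) α β → P β (dm a) u) then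
      TATree.node (taB dm P α u) (taB dm P α (dm a)) a
    else taB dm P α u

theorem taD_unw {D A : Type} (dm : A → D) (P : List A → D → D → Prop)
    (hloc : ∀ u v (α β : List A), taD dm P α u = taD dm P β u →
        taD dm P α v = taD dm P β v → (P α u v ↔ P β u v)) :
    ∀ {u : D} {α β : List A}, Unw dm P u α β → taD dm P α u = taD dm P β u := by
  intro u α β h
  induction h with
  | refl => rfl
  | symm _ ih => exact ih.symm
  | trans _ _ ih1 ih2 => exact ih1.trans ih2
  | dlr u α a hn => simp [taD, hn]
  | @wsc u α β a _ _ ih1 ih2 =>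
      by_cases hp : P α (dm a) u
      · have hp' : P β (dm a) u := (hloc (dm a) u α β ih2 ih1).mp hp
        simp [taD, hp, hp', ih1, ih2]
      · have hp' : ¬ P β (dm a) u := fun h => hp ((hloc (dm a) u α β ih2 ih1).mpr h)
        simp [taD, hp, hp', ih1]

theorem taD_eq_taB {D A : Type} (dm : A → D) (P : List A → D → D → Prop)
    (hloc : ∀ u v (α β : List A), taD dm P α u = taD dm P β u →
        taD dm P α v = taD dm P β v → (P α u v ↔ P β u v)) :
    ∀ (α : List A) (u : D), taD dm P α u = taB dm P α u := by
  intro α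
  induction α with
  | nil => intro u; rfl
  | cons a α ih =>
    intro u
    have hcond : P α (dm a) u ↔
        (∀ β, Unw dm P u α β → Unw dm P (dm a) α β → P β (dm a) u) := by
      constructor
      · intro hp β h1 h2
        exact (hloc (dm a) u α β (taD_unw dm P hloc h2) (taD_unw dm P hloc h1)).mp hp
      · intro h; exact h α (Unw.refl u α) (Unw.refl (dm a) α)
    show (if P α (dm a) u then TATree.node (taD dm P α u) (taD dm P α (dm a)) a
      else taD dm P α u) = _
    rw [if_congr hcond rfl rfl]
    by_cases hp : (∀ β, Unw dm P u α β → Unw dm P (dm a) α β → P β (dm a) u) <;>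
      simp [taB, hp, ih]

/-- for a local policy, `ta^◇`-security and `ta^□`-security coincide. -/
theorem statement_7 {D A S O : Type} (dm : A → D) (P : List A → D → D → Prop)
    (hrefl : ∀ α u, P α u u)
    (hloc : ∀ u v (α β : List A), taD dm P α u = taD dm P β u →
        taD dm P α v = taD dm P β v → (P α u v ↔ P β u v))
    (step : S → A → S) (s0 : S) (obs : D → S → O) :
    (∀ u (α β : List A), taD dm P α u = taD dm P β u →
        obs u (runL step s0 α) = obs u (runL step s0 β)) ↔
    (∀ u (α β : List A), taB dm P α u = taB dm P β u →
        obs u (runL step s0 α) = obs u (runL step s0 β)) := by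
  constructor
  · intro h u α β heq
    exact h u α β (by rw [taD_eq_taB dm P hloc, taD_eq_taB dm P hloc, heq])
  · intro h u α β heq
    exact h u α β (by rw [← taD_eq_taB dm P hloc, ← taD_eq_taB dm P hloc, heq])
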